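/- Let H = H(n,r,q|σ) with Δ(σ) ≥ α, δ(σ) ≤ r - β, α ≤ s(σ) ≤ β, q = (β-α+1)⌊(Δ-1)/(α-1)⌋ + Δ - 1 and n ≥ C(β+1, α-1)·(s(σ)-1) + s(σ). Then H is β-(α,β)-colourable but not (β+1)-(α,β)-colourable, and it is k-(α,β)-colourable for all k in the monochromatic zone [⌈(n - (s(σ)-1 - (α-1)⌊(s(σ)-1)/(α-1)⌋))/⌊(s(σ)-1)/(α-1)⌋⌉, n], whose lower bound exceeds β+1; hence the (α,β)-spectrum of H has a gap. -/

import Mathlib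

open Finset

/-- `K` is an edge of the σ-hypergraph `H(n,r,q | σ)`: the multiset of non-zero
cardinalities of the intersections of `K` with the `n` classes equals `σ`. -/
def sigmaEdge (n q : ℕ) (σ : Multiset ℕ) (K : Finset (Fin n × Fin q)) : Prop :=
  (((Finset.univ : Finset (Fin n)).val.map
      fun i => (K.filter fun v => v.1 = i).card).filter fun m => m ≠ 0) = σ

/-- `c` is an `(α,β)`-colouring: every edge contains at least `α` and at most `β` colours. -/
def isABColouring (n q : ℕ) (σ : Multiset ℕ) (α β : ℕ) (c : Fin n × Fin q → ℕ) : Prop :=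
  ∀ K : Finset (Fin n × Fin q), sigmaEdge n q σ K →
    α ≤ (K.image c).card ∧ (K.image c).card ≤ β

/-- `c` uses exactly `k` colours. -/
def usesExactly (n q k : ℕ) (c : Fin n × Fin q → ℕ) : Prop :=
  ((Finset.univ : Finset (Fin n × Fin q)).image c).card = k

/-- every class of the σ-hypergraph is monochromatic under `c`. -/
def classesMonochromatic (n q : ℕ) (c : Fin n × Fin q → ℕ) : Prop :=
  ∀ v w : Fin n × Fin q, v.1 = w.1 → c v = c w

/-- `σ` is a partition of `r` (a multiset of positive integers summing to `r`). -/
def IsPartitionOf (σ : Multiset ℕ) (r : ℕ) : Prop := σ.sum = r ∧ 0 ∉ σ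

section infra
variable {n q : ℕ}

def chunk (i : Fin n) (A : Finset (Fin q)) : Finset (Fin n × Fin q) :=
  A.map ⟨fun j => (i, j), fun a b h => (Prod.ext_iff.1 h).2⟩

lemma mem_chunk {i : Fin n} {A : Finset (Fin q)} {v : Fin n × Fin q} :
    v ∈ chunk i A ↔ v.1 = i ∧ v.2 ∈ A := by
  simp only [chunk, Finset.mem_map, Function.Embedding.coeFn_mk]
  constructor
  · rintro ⟨j, hj, rfl⟩; exact ⟨rfl, hj⟩
  · rintro ⟨h1, h2⟩; exact ⟨v.2, h2, by rw [← h1]; rfl⟩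

lemma chunk_card (i : Fin n) (A : Finset (Fin q)) : (chunk i A).card = A.card :=
  Finset.card_map _

lemma chunk_image {γ : Type*} [DecidableEq γ] (f : Fin n × Fin q → γ) (i : Fin n)
    (A : Finset (Fin q)) : (chunk i A).image f = A.image (fun j => f (i, j)) := by
  ext y; simp only [Finset.mem_image]
  constructor
  · rintro ⟨v, hv, rfl⟩; obtain ⟨h1, h2⟩ := mem_chunk.1 hv
    exact ⟨v.2, h2, by rw [← h1]⟩
  · rintro ⟨j, hj, rfl⟩; exact ⟨(i, j), mem_chunk.2 ⟨rfl, hj⟩, rfl⟩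

def build : List (Fin n × Finset (Fin q)) → Finset (Fin n × Fin q)
  | [] => ∅
  | pr :: l => chunk pr.1 pr.2 ∪ build l

lemma mem_build {l : List (Fin n × Finset (Fin q))} {v : Fin n × Fin q} :
    v ∈ build l ↔ ∃ pr ∈ l, v.1 = pr.1 ∧ v.2 ∈ pr.2 := by
  induction l with
  | nil => simp [build]
  | cons pr l ih => simp [build, Finset.mem_union, ih, mem_chunk, or_and_right, exists_or]

lemma build_filter_card {l : List (Fin n × Finset (Fin q))}
    (hnd : (l.map Prod.fst).Nodup) (i₀ : Fin n) (A : Finset (Fin q))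
    (hi₀ : i₀ ∉ l.map Prod.fst) :
    ∀ i : Fin n, ((build ((i₀, A) :: l)).filter fun v => v.1 = i).card
      = if i = i₀ then A.card else ((build l).filter fun v => v.1 = i).card := by
  intro i
  show ((chunk i₀ A ∪ build l).filter fun v => v.1 = i).card = _
  rw [Finset.filter_union]
  by_cases h : i = i₀
  · subst h
    have h1 : (chunk i A).filter (fun v => v.1 = i) = chunk i A := by
      apply Finset.filter_eq_self.2; intro v hv; exact (mem_chunk.1 hv).1
    have h2 : (build l).filter (fun v => v.1 = i) = ∅ := by
      apply Finset.filter_eq_empty_iff.2; intro v hv hvi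
      obtain ⟨pr, hpr, h3, _⟩ := mem_build.1 hv
      exact hi₀ (List.mem_map.2 ⟨pr, hpr, by rw [← h3]; exact hvi⟩)
    rw [h1, h2, Finset.union_empty, chunk_card, if_pos rfl]
  · have h1 : (chunk i₀ A).filter (fun v => v.1 = i) = ∅ := by
      apply Finset.filter_eq_empty_iff.2; intro v hv hvi
      exact h (hvi ▸ (mem_chunk.1 hv).1 ▸ rfl)
    rw [h1, Finset.empty_union, if_neg h]

lemma build_sigma {l : List (Fin n × Finset (Fin q))}
    (hnd : (l.map Prod.fst).Nodup) (h0 : ∀ pr ∈ l, pr.2.Nonempty) :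
    sigmaEdge n q ↑(l.map fun pr => pr.2.card) (build l) := by
  unfold sigmaEdge
  induction l with
  | nil =>
    have : ∀ i : Fin n, ((build ([] : List (Fin n × Finset (Fin q)))).filter
        fun v => v.1 = i).card = 0 := by
      intro i; simp [build]
    rw [Multiset.map_congr rfl (fun i _ => this i)]
    simp only [List.map_nil, Multiset.coe_nil]
    rw [Multiset.filter_eq_nil.2]
    intro a ha
    simp only [Multiset.mem_map] at ha
    obtain ⟨i, _, rfl⟩ := ha
    simp
  | cons pr l ih =>
    obtain ⟨i₀, A⟩ := pr
    have hnd' : (l.map Prod.fst).Nodup := (List.nodup_cons.1 hnd).2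
    have hi₀ : i₀ ∉ l.map Prod.fst := (List.nodup_cons.1 hnd).1
    have hA : A.Nonempty := h0 (i₀, A) (List.mem_cons_self)
    have key := build_filter_card hnd' i₀ A hi₀
    have huniv : (Finset.univ : Finset (Fin n)).val = i₀ ::ₘ (Finset.univ.val.erase i₀) :=
      (Multiset.cons_erase (Finset.mem_univ_val i₀)).symm
    have herase : ∀ i ∈ (Finset.univ : Finset (Fin n)).val.erase i₀, i ≠ i₀ := by
      intro i hi
      exact (Multiset.Nodup.mem_erase_iff (Finset.univ.nodup)).1 hi |>.1
    calc (Multiset.filter (fun m => m ≠ 0) ((Finset.univ : Finset (Fin n)).val.map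
          fun i => ((build ((i₀, A) :: l)).filter fun v => v.1 = i).card))
        = Multiset.filter (fun m => m ≠ 0) (A.card ::ₘ ((Finset.univ.val.erase i₀).map
            fun i => ((build l).filter fun v => v.1 = i).card)) := by
          conv_lhs => rw [huniv]
          rw [Multiset.map_cons, key i₀, if_pos rfl]
          exact congrArg _ (congrArg _ (Multiset.map_congr rfl
            fun i hi => by rw [key i, if_neg (herase i hi)]))
      _ = A.card ::ₘ Multiset.filter (fun m => m ≠ 0) ((Finset.univ.val.erase i₀).map
            fun i => ((build l).filter fun v => v.1 = i).card) := by
          rw [Multiset.filter_cons_of_pos]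
          simpa using hA.card_ne_zero
      _ = A.card ::ₘ Multiset.filter (fun m => m ≠ 0) (Finset.univ.val.map
            fun i => ((build l).filter fun v => v.1 = i).card) := by
          congr 1
          conv_rhs => rw [huniv]
          rw [Multiset.map_cons, Multiset.filter_cons_of_neg]
          have : ((build l).filter fun v => v.1 = i₀) = ∅ := by
            apply Finset.filter_eq_empty_iff.2; intro v hv hvi
            obtain ⟨pr, hpr, h3, _⟩ := mem_build.1 hv
            exact hi₀ (List.mem_map.2 ⟨pr, hpr, by rw [← h3]; exact hvi⟩)
          simp [this]
      _ = ↑(((i₀, A) :: l).map fun pr => pr.2.card) := by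
          rw [ih hnd' (fun pr hpr => h0 pr (List.mem_cons_of_mem _ hpr))]
          simp

lemma build_image {γ : Type*} [DecidableEq γ] (f : Fin n × Fin q → γ) (i : Fin n)
    (A : Finset (Fin q)) (l : List (Fin n × Finset (Fin q))) :
    (build ((i, A) :: l)).image f = A.image (fun j => f (i, j)) ∪ (build l).image f := by
  show (chunk i A ∪ build l).image f = _
  rw [Finset.image_union, chunk_image]

end infra

section spread
variable {n q α β Δ t : ℕ} {c : Fin n × Fin q → ℕ}

/-- multiplicity of colour `x` in class `C` -/
def multc (c : Fin n × Fin q → ℕ) (C : Fin n) (x : ℕ) : ℕ :=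
  (Finset.univ.filter fun j : Fin q => c (C, j) = x).card

/-- set of colours in class `C` -/
def KCol (c : Fin n × Fin q → ℕ) (C : Fin n) : Finset ℕ :=
  Finset.univ.image fun j : Fin q => c (C, j)

/-- class `C` is spread: any `α-1` colours have total multiplicity at most `Δ-1` -/
def SpreadP (c : Fin n × Fin q → ℕ) (α Δ : ℕ) (C : Fin n) : Prop :=
  ∀ S : Finset ℕ, S.card ≤ α - 1 → ∑ x ∈ S, multc c C x ≤ Δ - 1

lemma wsum_count (C : Fin n) (S : Finset ℕ) :
    (Finset.univ.filter fun j : Fin q => c (C, j) ∈ S).card = ∑ x ∈ S, multc c C x := by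
  rw [Finset.card_eq_sum_card_fiberwise
    (s := Finset.univ.filter fun j : Fin q => c (C, j) ∈ S) (f := fun j => c (C, j)) (t := S) (fun j hj => (Finset.mem_filter.1 hj).2)]
  apply Finset.sum_congr rfl
  intro x hx
  unfold multc
  congr 1
  ext j
  simp only [Finset.mem_filter, Finset.mem_univ, true_and, and_iff_right_iff_imp]
  intro h; rw [h]; exact hx

lemma wsum_total (C : Fin n) : ∑ x ∈ KCol c C, multc c C x = q := by
  have h := wsum_count (c := c) C (KCol c C)
  have h2 : (Finset.univ.filter fun j : Fin q => c (C, j) ∈ KCol c C) = Finset.univ := by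
    apply Finset.filter_eq_self.2
    intro j _
    exact Finset.mem_image_of_mem _ (Finset.mem_univ j)
  rw [h2] at h
  simpa using h.symm

lemma multc_zero_of_not_mem {C : Fin n} {x : ℕ} (hx : x ∉ KCol c C) : multc c C x = 0 := by
  unfold multc
  rw [Finset.card_eq_zero, Finset.filter_eq_empty_iff]
  intro j _ hj
  exact hx (hj ▸ Finset.mem_image_of_mem _ (Finset.mem_univ j))

lemma spread_wsum_le (hα : 2 ≤ α) (ht : t = (Δ - 1) / (α - 1)) {C : Fin n}
    (hsp : SpreadP c α Δ C) :
    ∀ S : Finset ℕ, ∑ x ∈ S, multc c C x ≤ (Δ - 1) + (S.card - (α - 1)) * t := by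
  suffices h : ∀ (N : ℕ) (S : Finset ℕ), S.card ≤ N →
      ∑ x ∈ S, multc c C x ≤ (Δ - 1) + (S.card - (α - 1)) * t by
    intro S; exact h S.card S le_rfl
  intro N
  induction N with
  | zero =>
    intro S hS
    have : S.card ≤ α - 1 := by omega
    exact (hsp S this).trans (by omega)
  | succ N ih =>
    intro S hS
    by_cases hc : S.card ≤ α - 1
    · exact (hsp S hc).trans (by omega)
    · push_neg at hc
      have hne : S.Nonempty := Finset.card_pos.1 (by omega)
      obtain ⟨x, hx, hmin⟩ := Finset.exists_min_image S (multc c C) hne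
      have hxt : multc c C x ≤ t := by
        obtain ⟨S', hS'sub, hS'card⟩ := Finset.exists_subset_card_eq (show α - 1 ≤ S.card by omega)
        have h1 : S'.card * multc c C x ≤ ∑ y ∈ S', multc c C y := by
          have := Finset.card_nsmul_le_sum S' (multc c C) (multc c C x)
            (fun y hy => hmin y (hS'sub hy))
          simpa [smul_eq_mul] using this
        have h2 : ∑ y ∈ S', multc c C y ≤ Δ - 1 := hsp S' (le_of_eq hS'card)
        have h3 : (α - 1) * multc c C x ≤ Δ - 1 := by
          calc (α - 1) * multc c C x = S'.card * multc c C x := by rw [hS'card]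
            _ ≤ ∑ y ∈ S', multc c C y := h1
            _ ≤ Δ - 1 := h2
        rw [ht]
        rw [Nat.le_div_iff_mul_le (by omega : 0 < α - 1)]
        calc multc c C x * (α - 1) = (α - 1) * multc c C x := Nat.mul_comm _ _
          _ ≤ Δ - 1 := h3
      have hsum : ∑ y ∈ S.erase x, multc c C y + multc c C x = ∑ y ∈ S, multc c C y :=
        Finset.sum_erase_add S _ hx
      have hcard : (S.erase x).card = S.card - 1 := Finset.card_erase_of_mem hx
      have hih := ih (S.erase x) (by omega)
      rw [hcard] at hih
      have hexp : (S.card - (α - 1)) * t = (S.card - 1 - (α - 1)) * t + t := by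
        have h4 : S.card - (α - 1) = (S.card - 1 - (α - 1)) + 1 := by omega
        rw [h4, Nat.add_mul, Nat.one_mul]
      omega

lemma spread_exists_new (hα : 2 ≤ α) (hαβ : α ≤ β) (ht : t = (Δ - 1) / (α - 1))
    (ht1 : 1 ≤ t) (hq : q = (β - α + 1) * t + (Δ - 1)) {C : Fin n}
    (hsp : SpreadP c α Δ C) {R : Finset ℕ} (hR : R.card ≤ β - 1) :
    ∃ j : Fin q, c (C, j) ∉ R := by
  have h1 := spread_wsum_le hα ht hsp R
  have h2 : (R.card - (α - 1)) * t ≤ (β - α) * t := Nat.mul_le_mul_right _ (by omega)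
  have h3 : (β - α + 1) * t = (β - α) * t + t := by rw [Nat.add_mul, Nat.one_mul]
  have h4 : (Finset.univ.filter fun j : Fin q => c (C, j) ∈ R).card < q := by
    rw [wsum_count]
    omega
  by_contra hcon
  push_neg at hcon
  have : (Finset.univ.filter fun j : Fin q => c (C, j) ∈ R) = Finset.univ :=
    Finset.filter_eq_self.2 (fun j _ => hcon j)
  rw [this] at h4
  simp at h4

lemma spread_many_colours (hα : 2 ≤ α) (hαβ : α ≤ β) (ht : t = (Δ - 1) / (α - 1))
    (ht1 : 1 ≤ t) (hq : q = (β - α + 1) * t + (Δ - 1)) {C : Fin n}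
    (hsp : SpreadP c α Δ C) : β ≤ (KCol c C).card := by
  by_contra hcon
  push_neg at hcon
  have h1 := spread_wsum_le hα ht hsp (KCol c C)
  rw [wsum_total] at h1
  have h2 : ((KCol c C).card - (α - 1)) * t ≤ (β - α) * t := Nat.mul_le_mul_right _ (by omega)
  have h3 : (β - α + 1) * t = (β - α) * t + t := by rw [Nat.add_mul, Nat.one_mul]
  omega

lemma spread_dist (hα : 2 ≤ α) (hαβ : α ≤ β) (ht : t = (Δ - 1) / (α - 1))
    (ht1 : 1 ≤ t) (hq : q = (β - α + 1) * t + (Δ - 1)) {C : Fin n}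
    (hsp : SpreadP c α Δ C) :
    ∀ (m : ℕ) (R : Finset ℕ), m ≤ β - R.card →
      ∃ B : Finset (Fin q), B.card = m ∧ (B.image fun j => c (C, j)).card = m ∧
        ∀ j ∈ B, c (C, j) ∉ R := by
  intro m
  induction m with
  | zero => intro R _; exact ⟨∅, by simp, by simp, by simp⟩
  | succ m ih =>
    intro R hR
    obtain ⟨B, hBcard, hBimg, hBR⟩ := ih R (by omega)
    set R' := R ∪ (B.image fun j => c (C, j)) with hR'
    have hR'card : R'.card ≤ β - 1 := by
      have hu : R'.card ≤ R.card + m := by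
        rw [hR']
        exact (Finset.card_union_le _ _).trans (by omega)
      omega
    obtain ⟨j₀, hj₀⟩ := spread_exists_new hα hαβ ht ht1 hq hsp hR'card
    have hj₀R : c (C, j₀) ∉ R := fun h => hj₀ (Finset.mem_union_left _ h)
    have hj₀B : c (C, j₀) ∉ B.image fun j => c (C, j) :=
      fun h => hj₀ (Finset.mem_union_right _ h)
    have hj₀notB : j₀ ∉ B := fun h => hj₀B (Finset.mem_image_of_mem _ h)
    refine ⟨insert j₀ B, ?_, ?_, ?_⟩
    · rw [Finset.card_insert_of_notMem hj₀notB, hBcard]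
    · rw [Finset.image_insert, Finset.card_insert_of_notMem hj₀B, hBimg]
    · intro j hj
      rcases Finset.mem_insert.1 hj with h | h
      · subst h; exact hj₀R
      · exact hBR j h

lemma spread_pick (hα : 2 ≤ α) (hαβ : α ≤ β) (ht : t = (Δ - 1) / (α - 1))
    (ht1 : 1 ≤ t) (hq : q = (β - α + 1) * t + (Δ - 1)) {C : Fin n}
    (hsp : SpreadP c α Δ C) (p : ℕ) (hp : p ≤ q) (R : Finset ℕ) :
    ∃ A : Finset (Fin q), A.card = p ∧
      min (R.card + p) β ≤ (R ∪ A.image fun j => c (C, j)).card := by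
  set m := min p (β - R.card) with hm
  have hm1 : m ≤ p := min_le_left _ _
  have hm2 : m ≤ β - R.card := min_le_right _ _
  obtain ⟨B, hBcard, hBimg, hBR⟩ := spread_dist hα hαβ ht ht1 hq hsp m R hm2
  obtain ⟨A, hBA, hAcard⟩ := Finset.exists_superset_card_eq
    (show B.card ≤ p by omega) (by rw [Fintype.card_fin]; exact hp)
  refine ⟨A, hAcard, ?_⟩
  have h1 : (R ∪ B.image fun j => c (C, j)).card = R.card + m := by
    rw [Finset.card_union_of_disjoint, hBimg]
    rw [Finset.disjoint_right]
    intro x hx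
    obtain ⟨j, hj, rfl⟩ := Finset.mem_image.1 hx
    exact hBR j hj
  have h2 : (R ∪ B.image fun j => c (C, j)) ⊆ (R ∪ A.image fun j => c (C, j)) :=
    Finset.union_subset_union_right (Finset.image_subset_image hBA)
  have h3 := Finset.card_le_card h2
  omega

lemma spread_pick_pri (hα : 2 ≤ α) (hαβ : α ≤ β) (ht : t = (Δ - 1) / (α - 1))
    (ht1 : 1 ≤ t) (hq : q = (β - α + 1) * t + (Δ - 1)) {C : Fin n}
    (hsp : SpreadP c α Δ C) (p : ℕ) (hp1 : 1 ≤ p) (hp : p ≤ q) (R : Finset ℕ)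
    {x : ℕ} (hx : x ∈ KCol c C) (hxR : x ∉ R) :
    ∃ A : Finset (Fin q), A.card = p ∧ x ∈ (A.image fun j => c (C, j)) ∧
      min (R.card + p) β ≤ (R ∪ A.image fun j => c (C, j)).card := by
  obtain ⟨jx, _, hjx⟩ := Finset.mem_image.1 hx
  set R' := insert x R with hR'
  have hR'card : R'.card = R.card + 1 := Finset.card_insert_of_notMem hxR
  set m := min (p - 1) (β - R'.card) with hm
  have hm1 : m ≤ p - 1 := min_le_left _ _
  have hm2 : m ≤ β - R'.card := min_le_right _ _
  obtain ⟨B, hBcard, hBimg, hBR⟩ := spread_dist hα hαβ ht ht1 hq hsp m R' hm2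
  have hjxB : jx ∉ B := by
    intro h
    exact hBR jx h (hjx ▸ Finset.mem_insert_self x R)
  set B' := insert jx B with hB'
  have hB'card : B'.card = m + 1 := by
    rw [hB', Finset.card_insert_of_notMem hjxB, hBcard]
  obtain ⟨A, hBA, hAcard⟩ := Finset.exists_superset_card_eq
    (show B'.card ≤ p by omega) (by rw [Fintype.card_fin]; exact hp)
  have hjxA : jx ∈ A := hBA (Finset.mem_insert_self _ _)
  refine ⟨A, hAcard, ?_, ?_⟩
  · exact Finset.mem_image.2 ⟨jx, hjxA, hjx⟩
  · have h1 : (R' ∪ B.image fun j => c (C, j)).card = R.card + 1 + m := by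
      rw [Finset.card_union_of_disjoint, hBimg, hR'card]
      rw [Finset.disjoint_right]
      intro y hy
      obtain ⟨j, hj, rfl⟩ := Finset.mem_image.1 hy
      exact hBR j hj
    have h2 : (R' ∪ B.image fun j => c (C, j)) ⊆ (R ∪ A.image fun j => c (C, j)) := by
      intro y hy
      rcases Finset.mem_union.1 hy with h | h
      · rcases Finset.mem_insert.1 h with h | h
        · subst h
          exact Finset.mem_union_right _ (Finset.mem_image.2 ⟨jx, hjxA, hjx⟩)
        · exact Finset.mem_union_left _ h
      · exact Finset.mem_union_right _
          (Finset.image_subset_image (Finset.Subset.trans (Finset.subset_insert jx B) hBA) h)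
    have h3 := Finset.card_le_card h2
    omega

end spread

section assembly
variable {n q α β Δ : ℕ} {t : ℕ} {c : Fin n × Fin q → ℕ}

lemma KCol_subset (C : Fin n) : KCol c C ⊆ Finset.univ.image c := by
  intro y hy
  obtain ⟨j, _, rfl⟩ := Finset.mem_image.1 hy
  exact Finset.mem_image.2 ⟨(C, j), Finset.mem_univ _, rfl⟩

lemma build_colours {lA : List (Fin n × Finset (Fin q))} {y : ℕ}
    (hy : y ∈ (build lA).image c) : ∃ pr ∈ lA, y ∈ KCol c pr.1 := by
  obtain ⟨v, hv, rfl⟩ := Finset.mem_image.1 hy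
  obtain ⟨pr, hpr, h1, h2⟩ := mem_build.1 hv
  refine ⟨pr, hpr, ?_⟩
  have hveq : v = (pr.1, v.2) := Prod.ext h1 rfl
  rw [hveq]
  exact Finset.mem_image_of_mem _ (Finset.mem_univ v.2)

lemma assemble (hα : 2 ≤ α) (hαβ : α ≤ β) (ht : t = (Δ - 1) / (α - 1))
    (ht1 : 1 ≤ t) (hq : q = (β - α + 1) * t + (Δ - 1)) :
    ∀ (cl : List (Fin n)) (pl : List ℕ), cl.length = pl.length →
      (∀ C ∈ cl, SpreadP c α Δ C) → (∀ p ∈ pl, 1 ≤ p ∧ p ≤ q) → ∀ R : Finset ℕ,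
      ∃ lA : List (Fin n × Finset (Fin q)), lA.map Prod.fst = cl ∧
        (lA.map fun pr => pr.2.card) = pl ∧
        min (R.card + pl.sum) β ≤ (R ∪ (build lA).image c).card := by
  intro cl
  induction cl with
  | nil =>
    intro pl hlen _ _ R
    have : pl = [] := List.length_eq_zero_iff.1 (by simpa using hlen.symm)
    subst this
    refine ⟨[], rfl, rfl, ?_⟩
    show min (R.card + 0) β ≤ (R ∪ (∅ : Finset (Fin n × Fin q)).image c).card
    simp
  | cons C cl ih =>
    intro pl hlen hsp hp R
    cases pl with
    | nil => simp at hlen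
    | cons p pl' =>
      have hC : SpreadP c α Δ C := hsp C (List.mem_cons_self)
      obtain ⟨A, hAcard, hAbound⟩ := spread_pick hα hαβ ht ht1 hq hC p
        (hp p (List.mem_cons_self)).2 R
      set R1 := R ∪ A.image (fun j => c (C, j)) with hR1
      obtain ⟨lA', h1, h2, h3⟩ := ih pl' (by simpa using hlen)
        (fun C' h => hsp _ (List.mem_cons_of_mem _ h))
        (fun p' h => hp _ (List.mem_cons_of_mem _ h)) R1
      refine ⟨(C, A) :: lA', by simp [h1], by simp [h2, hAcard], ?_⟩
      rw [build_image]
      have hassoc : R ∪ ((A.image fun j => c (C, j)) ∪ (build lA').image c)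
          = R1 ∪ (build lA').image c := by
        rw [hR1, Finset.union_assoc]
      rw [hassoc]
      have hsum : (p :: pl').sum = p + pl'.sum := by simp
      rw [hsum]
      omega

lemma zipbuild (P : Fin n → Finset (Fin q) → Prop) :
    ∀ (cl : List (Fin n)) (pl : List ℕ), cl.length = pl.length →
      (∀ C ∈ cl, ∀ p ∈ pl, ∃ A : Finset (Fin q), A.card = p ∧ P C A) →
      ∃ lA : List (Fin n × Finset (Fin q)), lA.map Prod.fst = cl ∧
        (lA.map fun pr => pr.2.card) = pl ∧ ∀ pr ∈ lA, P pr.1 pr.2 := by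
  intro cl
  induction cl with
  | nil =>
    intro pl hlen _
    have : pl = [] := List.length_eq_zero_iff.1 (by simpa using hlen.symm)
    subst this
    exact ⟨[], rfl, rfl, by simp⟩
  | cons C cl ih =>
    intro pl hlen hex
    cases pl with
    | nil => simp at hlen
    | cons p pl' =>
      obtain ⟨A, hAcard, hAP⟩ := hex C (List.mem_cons_self) p (List.mem_cons_self)
      obtain ⟨lA', h1, h2, h3⟩ := ih pl' (by simpa using hlen)
        (fun C' hC' p' hp' => hex C' (List.mem_cons_of_mem _ hC') p' (List.mem_cons_of_mem _ hp'))
      refine ⟨(C, A) :: lA', by simp [h1], by simp [h2, hAcard], ?_⟩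
      intro pr hpr
      rcases List.mem_cons.1 hpr with h | h
      · subst h; exact hAP
      · exact h3 pr h

lemma low_edge {σ : Multiset ℕ} (hcol : isABColouring n q σ α β c) (hα : 2 ≤ α)
    (h0 : 0 ∉ σ) (hΔmax : ∀ x ∈ σ, x ≤ Δ) (hΔq : Δ ≤ q)
    (S₀ : Finset ℕ) (hS₀ : S₀.card ≤ α - 1) (T : Finset (Fin n)) (hT : T.card = σ.card)
    (hw : ∀ C ∈ T, Δ ≤ ∑ x ∈ S₀, multc c C x) : False := by
  have hlen : T.toList.length = σ.toList.length := by
    rw [Finset.length_toList, Multiset.length_toList, hT]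
  have hex : ∀ C ∈ T.toList, ∀ p ∈ σ.toList, ∃ A : Finset (Fin q), A.card = p ∧
      A ⊆ Finset.univ.filter (fun j => c (C, j) ∈ S₀) := by
    intro C hC p hp
    have hCT : C ∈ T := by rwa [← Finset.mem_toList]
    have hpσ : p ∈ σ := by rwa [← Multiset.mem_toList]
    have hpΔ : p ≤ Δ := hΔmax p hpσ
    have hfil : p ≤ (Finset.univ.filter fun j : Fin q => c (C, j) ∈ S₀).card := by
      rw [wsum_count]
      exact hpΔ.trans (hw C hCT)
    obtain ⟨B, hBsub, hBcard⟩ := Finset.exists_subset_card_eq hfil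
    exact ⟨B, hBcard, hBsub⟩
  obtain ⟨lA, hfst, hcards, hsub⟩ := zipbuild
    (fun C A => A ⊆ Finset.univ.filter (fun j => c (C, j) ∈ S₀)) T.toList σ.toList hlen hex
  · have hnd : (lA.map Prod.fst).Nodup := by rw [hfst]; exact Finset.nodup_toList T
    have hne : ∀ pr ∈ lA, pr.2.Nonempty := by
      intro pr hpr
      apply Finset.card_pos.1
      have : pr.2.card ∈ lA.map fun pr => pr.2.card := List.mem_map_of_mem hpr
      rw [hcards] at this
      have h2 : pr.2.card ∈ σ := by rwa [Multiset.mem_toList] at this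
      rcases Nat.eq_zero_or_pos pr.2.card with h | h
      · exact absurd (h ▸ h2) h0
      · exact h
    have hedge : sigmaEdge n q σ (build lA) := by
      have := build_sigma hnd hne
      rwa [hcards, Multiset.coe_toList] at this
    have himg : (build lA).image c ⊆ S₀ := by
      intro y hy
      obtain ⟨v, hv, rfl⟩ := Finset.mem_image.1 hy
      obtain ⟨pr, hpr, h1, h2⟩ := mem_build.1 hv
      have h3 := hsub pr hpr h2
      have h4 : c (pr.1, v.2) ∈ S₀ := (Finset.mem_filter.1 h3).2
      have hveq : v = (pr.1, v.2) := Prod.ext h1 rfl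
      rwa [hveq]
    have h5 := (hcol (build lA) hedge).1
    have h6 := Finset.card_le_card himg
    omega

lemma high_edge_false {σ : Multiset ℕ} {δ : ℕ} (hcol : isABColouring n q σ α β c)
    (hδmem : δ ∈ σ) (h0 : 0 ∉ σ) (hδq : δ ≤ q)
    (huse : (Finset.univ.image c).card = β + 1)
    (D : Fin n) (lB : List (Fin n × Finset (Fin q)))
    (hcards : (lB.map fun pr => pr.2.card) = (σ.erase δ).toList)
    (hnd : (lB.map Prod.fst).Nodup) (hD : D ∉ lB.map Prod.fst)
    (hβle : β ≤ ((build lB).image c).card)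
    (hextra : ∀ x ∈ (Finset.univ.image c), x ∉ (build lB).image c → x ∈ KCol c D) :
    False := by
  have hδ1 : 1 ≤ δ := by
    rcases Nat.eq_zero_or_pos δ with h | h
    · exact absurd (h ▸ hδmem) h0
    · exact h
  have hne : ∀ pr ∈ lB, pr.2.Nonempty := by
    intro pr hpr
    apply Finset.card_pos.1
    have : pr.2.card ∈ lB.map fun pr => pr.2.card := List.mem_map_of_mem hpr
    rw [hcards] at this
    have h2 : pr.2.card ∈ σ.erase δ := by rwa [Multiset.mem_toList] at this
    have h3 : pr.2.card ∈ σ := Multiset.mem_of_mem_erase h2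
    rcases Nat.eq_zero_or_pos pr.2.card with h | h
    · exact absurd (h ▸ h3) h0
    · exact h
  set I₁ := (build lB).image c with hI₁
  have hIU : I₁ ⊆ Finset.univ.image c := Finset.image_subset_image (Finset.subset_univ _)
  have hIcard : I₁.card ≤ β + 1 := huse ▸ Finset.card_le_card hIU
  -- a finishing move: given A with the right card, build the edge
  have hfinish : ∀ A : Finset (Fin q), A.card = δ →
      ((build ((D, A) :: lB)).image c).card ≤ β := by
    intro A hAcard
    have hnd' : ((( D, A) :: lB).map Prod.fst).Nodup := by
      simp only [List.map_cons, List.nodup_cons]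
      exact ⟨hD, hnd⟩
    have hne' : ∀ pr ∈ (D, A) :: lB, pr.2.Nonempty := by
      intro pr hpr
      rcases List.mem_cons.1 hpr with h | h
      · subst h
        apply Finset.card_pos.1
        show 0 < A.card
        omega
      · exact hne pr h
    have hedge : sigmaEdge n q σ (build ((D, A) :: lB)) := by
      have := build_sigma hnd' hne'
      have hc2 : (((D, A) :: lB).map fun pr => pr.2.card) = δ :: (σ.erase δ).toList := by
        simp [hcards, hAcard]
      rw [hc2] at this
      have hc3 : ((δ :: (σ.erase δ).toList : List ℕ) : Multiset ℕ) = σ := by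
        rw [← Multiset.cons_coe, Multiset.coe_toList]
        exact Multiset.cons_erase hδmem
      rwa [hc3] at this
    exact (hcol _ hedge).2
  by_cases hge : β + 1 ≤ I₁.card
  · obtain ⟨A, _, hAcard⟩ := Finset.exists_subset_card_eq 
      (show δ ≤ (Finset.univ : Finset (Fin q)).card by simpa using hδq)
    have h1 := hfinish A hAcard
    have h2 : I₁ ⊆ (build ((D, A) :: lB)).image c := by
      rw [build_image]
      exact Finset.subset_union_right
    have := Finset.card_le_card h2
    omega
  · push_neg at hge
    have hIβ : I₁.card = β := by omega
    have hsd : (Finset.univ.image c \ I₁).Nonempty := by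
      apply Finset.card_pos.1
      rw [Finset.card_sdiff_of_subset hIU]
      omega
    obtain ⟨z, hz⟩ := hsd
    obtain ⟨hzU, hzI⟩ := Finset.mem_sdiff.1 hz
    have hzD : z ∈ KCol c D := hextra z hzU hzI
    obtain ⟨j₀, _, hj₀⟩ := Finset.mem_image.1 hzD
    obtain ⟨A, hjA, hAcard⟩ := Finset.exists_superset_card_eq
      (show ({j₀} : Finset (Fin q)).card ≤ δ by simpa using hδ1)
      (by rw [Fintype.card_fin]; exact hδq)
    have h1 := hfinish A hAcard
    have h2 : insert z I₁ ⊆ (build ((D, A) :: lB)).image c := by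
      rw [build_image]
      intro y hy
      rcases Finset.mem_insert.1 hy with h | h
      · subst h
        exact Finset.mem_union_left _
          (Finset.mem_image.2 ⟨j₀, hjA (Finset.mem_singleton_self _), hj₀⟩)
      · exact Finset.mem_union_right _ h
    have h3 := Finset.card_le_card h2
    rw [Finset.card_insert_of_notMem hzI] at h3
    omega

end assembly

lemma part2 {n q r α β Δ δ : ℕ} {σ : Multiset ℕ}
    (hsum : σ.sum = r) (h0 : 0 ∉ σ)
    (hΔmem : Δ ∈ σ) (hΔmax : ∀ x ∈ σ, x ≤ Δ)
    (hδmem : δ ∈ σ)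
    (hα : 2 ≤ α) (hΔα : α ≤ Δ) (hδβ : δ ≤ r - β)
    (hαs : α ≤ σ.card) (hsβ : σ.card ≤ β)
    (hq : q = (β - α + 1) * ((Δ - 1) / (α - 1)) + Δ - 1)
    (hn : (β + 1).choose (α - 1) * (σ.card - 1) + σ.card ≤ n) :
    ¬ ∃ c : Fin n × Fin q → ℕ, isABColouring n q σ α β c ∧ usesExactly n q (β + 1) c := by
  rintro ⟨c, hcol, huse⟩
  classical
  set t := (Δ - 1) / (α - 1) with ht
  have hαβ : α ≤ β := hαs.trans hsβ
  have hΔ2 : 2 ≤ Δ := hα.trans hΔα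
  have ht1 : 1 ≤ t := Nat.one_le_div_iff (by omega) |>.2 (by omega)
  have hq' : q = (β - α + 1) * t + (Δ - 1) := by omega
  have hΔq : Δ ≤ q := by
    have h1 : t ≤ (β - α + 1) * t := Nat.le_mul_of_pos_left t (by omega)
    omega
  have hδ1 : 1 ≤ δ := by
    rcases Nat.eq_zero_or_pos δ with h | h
    · exact absurd (h ▸ hδmem) h0
    · exact h
  have hδΔ : δ ≤ Δ := hΔmax δ hδmem
  have hδq : δ ≤ q := hδΔ.trans hΔq
  have hrβδ : β + δ ≤ r := by omega
  have hs2 : 2 ≤ σ.card := by omega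
  set U := Finset.univ.image c with hUdef
  have hU : U.card = β + 1 := huse
  set SS := Finset.univ.filter (fun C : Fin n => SpreadP c α Δ C) with hSSdef
  -- Step 1: at least σ.card classes are spread
  have hSS : σ.card ≤ SS.card := by
    by_contra hcon
    push_neg at hcon
    set SSc := Finset.univ.filter (fun C : Fin n => ¬ SpreadP c α Δ C) with hSScdef
    have hsplit : SS.card + SSc.card = n := by
      have := Finset.card_filter_add_card_filter_not
        (s := (Finset.univ : Finset (Fin n))) (p := fun C => SpreadP c α Δ C)
      simpa using this
    have hcard : (β + 1).choose (α - 1) * (σ.card - 1) < SSc.card := by omega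
    have hexC : ∀ C ∈ SSc, ∃ S₀, S₀ ∈ Finset.powersetCard (α - 1) U ∧
        Δ ≤ ∑ x ∈ S₀, multc c C x := by
      intro C hC
      have hnsp : ¬ SpreadP c α Δ C := (Finset.mem_filter.1 hC).2
      unfold SpreadP at hnsp
      push_neg at hnsp
      obtain ⟨S, hScard, hSw⟩ := hnsp
      have hSw' : Δ ≤ ∑ x ∈ S, multc c C x := by omega
      set S1 := S.filter (· ∈ U) with hS1
      have hsplitS : ∑ x ∈ S.filter (· ∈ U), multc c C x
          + ∑ x ∈ S.filter (fun x => ¬ x ∈ U), multc c C x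
          = ∑ x ∈ S, multc c C x := Finset.sum_filter_add_sum_filter_not S _ _
      have hzero : ∑ x ∈ S.filter (fun x => ¬ x ∈ U), multc c C x = 0 := by
        apply Finset.sum_eq_zero
        intro x hx
        have hxU : x ∉ U := (Finset.mem_filter.1 hx).2
        exact multc_zero_of_not_mem (fun h => hxU (KCol_subset C h))
      have hS1w : Δ ≤ ∑ x ∈ S1, multc c C x := by
        rw [hS1]; omega
      have hS1U : S1 ⊆ U := fun x hx => (Finset.mem_filter.1 hx).2
      have hS1card : S1.card ≤ α - 1 := (Finset.card_le_card (Finset.filter_subset _ _)).trans hScard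
      obtain ⟨S₀, hsub1, hsub2, hcardS₀⟩ := Finset.exists_subsuperset_card_eq
        hS1U hS1card (by rw [hU]; omega)
      refine ⟨S₀, Finset.mem_powersetCard.2 ⟨hsub2, by omega⟩, ?_⟩
      exact hS1w.trans (Finset.sum_le_sum_of_subset hsub1)
    set f : Fin n → Finset ℕ := fun C =>
      if h : ∃ S₀, S₀ ∈ Finset.powersetCard (α - 1) U ∧ Δ ≤ ∑ x ∈ S₀, multc c C x
      then h.choose else ∅ with hfdef
    have hmaps : ∀ C ∈ SSc, f C ∈ Finset.powersetCard (α - 1) U := by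
      intro C hC
      have h := hexC C hC
      rw [hfdef]
      simp only [dif_pos h]
      exact h.choose_spec.1
    have hlt : (Finset.powersetCard (α - 1) U).card * (σ.card - 1) < SSc.card := by
      rw [Finset.card_powersetCard, hU]
      exact hcard
    obtain ⟨S₀, hS₀mem, hfib⟩ :=
      Finset.exists_lt_card_fiber_of_mul_lt_card_of_maps_to hmaps hlt
    obtain ⟨T, hTsub, hTcard⟩ := Finset.exists_subset_card_eq
      (show σ.card ≤ (SSc.filter fun C => f C = S₀).card by omega)
    have hS₀card : S₀.card ≤ α - 1 := le_of_eq (Finset.mem_powersetCard.1 hS₀mem).2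
    apply low_edge hcol hα h0 hΔmax hΔq S₀ hS₀card T hTcard
    intro C hCT
    have hCfib := hTsub hCT
    have hCSSc : C ∈ SSc := (Finset.mem_filter.1 hCfib).1
    have hCf : f C = S₀ := (Finset.mem_filter.1 hCfib).2
    have h := hexC C hCSSc
    have hfC : f C = h.choose := by rw [hfdef]; simp only [dif_pos h]
    have := h.choose_spec.2
    rwa [← hfC, hCf] at this
  -- list of the parts other than one copy of δ
  set ℓ' := (σ.erase δ).toList with hℓdef
  have hℓlen : ℓ'.length = σ.card - 1 := by
    rw [hℓdef, Multiset.length_toList, Multiset.card_erase_of_mem hδmem]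
    rfl
  have hℓsum : ℓ'.sum = r - δ := by
    have h1 : δ ::ₘ σ.erase δ = σ := Multiset.cons_erase hδmem
    have h2 := congrArg Multiset.sum h1
    rw [Multiset.sum_cons, hsum] at h2
    have h3 : (σ.erase δ).sum = ℓ'.sum := by
      conv_lhs => rw [← Multiset.coe_toList (σ.erase δ)]
      exact Multiset.sum_coe _
    omega
  have hparts : ∀ p ∈ ℓ', 1 ≤ p ∧ p ≤ q := by
    intro p hp
    have hp1 : p ∈ σ.erase δ := by rwa [hℓdef, Multiset.mem_toList] at hp
    have hp2 : p ∈ σ := Multiset.mem_of_mem_erase hp1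
    have : 1 ≤ p := by
      rcases Nat.eq_zero_or_pos p with h | h
      · exact absurd (h ▸ hp2) h0
      · exact h
    exact ⟨this, (hΔmax p hp2).trans hΔq⟩
  have hKColU : ∀ C : Fin n, KCol c C ⊆ U := fun C => KCol_subset C
  -- helper: assemble β colours on any σ.card - 1 spread classes
  have hassembleβ : ∀ T₁ : Finset (Fin n), T₁ ⊆ SS → T₁.card = σ.card - 1 →
      ∃ lB : List (Fin n × Finset (Fin q)), (lB.map Prod.fst) = T₁.toList ∧
        (lB.map fun pr => pr.2.card) = ℓ' ∧ β ≤ ((build lB).image c).card := by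
    intro T₁ hsub hcard
    have hlen : T₁.toList.length = ℓ'.length := by
      rw [Finset.length_toList, hcard, hℓlen]
    have hspr : ∀ C ∈ T₁.toList, SpreadP c α Δ C := by
      intro C hC
      have : C ∈ T₁ := by rwa [← Finset.mem_toList]
      exact (Finset.mem_filter.1 (hsub this)).2
    obtain ⟨lB, h1, h2, h3⟩ := assemble hα hαβ ht ht1 hq' T₁.toList ℓ' hlen hspr hparts ∅
    refine ⟨lB, h1, h2, ?_⟩
    rw [Finset.empty_union] at h3
    have h4 : min ((∅ : Finset ℕ).card + ℓ'.sum) β = β := by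
      apply min_eq_right
      rw [Finset.card_empty, Nat.zero_add, hℓsum]
      omega
    omega
  -- the high edge in each of the three cases
  by_cases hB1 : ∃ D ∈ SS, U ⊆ KCol c D
  · obtain ⟨D, hDSS, hDU⟩ := hB1
    have hDer : σ.card - 1 ≤ (SS.erase D).card := by
      rw [Finset.card_erase_of_mem hDSS]
      omega
    obtain ⟨T₁, hT₁sub, hT₁card⟩ := Finset.exists_subset_card_eq hDer
    obtain ⟨lB, hfst, hcards, hβle⟩ := hassembleβ T₁
      (hT₁sub.trans (Finset.erase_subset _ _)) hT₁card
    apply high_edge_false hcol hδmem h0 hδq huse D lB hcards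
    · rw [hfst]; exact Finset.nodup_toList T₁
    · rw [hfst]
      intro hmem
      have : D ∈ T₁ := by rwa [← Finset.mem_toList]
      exact (Finset.mem_erase.1 (hT₁sub this)).1 rfl
    · exact hβle
    · intro x hx _
      exact hDU hx
  push_neg at hB1
  have hKβ : ∀ D ∈ SS, (KCol c D).card = β := by
    intro D hD
    have hge : β ≤ (KCol c D).card :=
      spread_many_colours hα hαβ ht ht1 hq' (Finset.mem_filter.1 hD).2
    have hle : (KCol c D).card ≤ β + 1 := hU ▸ Finset.card_le_card (hKColU D)
    rcases Nat.lt_or_ge (KCol c D).card (β + 1) with h | h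
    · omega
    · exfalso
      have : KCol c D = U := Finset.eq_of_subset_of_card_le (hKColU D) (by omega)
      exact hB1 D hD (this ▸ Finset.Subset.refl _)
  by_cases hB3 : ∃ C₁ ∈ SS, ∃ C₂ ∈ SS, ∃ z ∈ U, z ∉ KCol c C₁ ∧ z ∈ KCol c C₂
  · obtain ⟨C₁, hC₁, C₂, hC₂, z, hzU, hz1, hz2⟩ := hB3
    have hne12 : C₁ ≠ C₂ := fun h => hz1 (h ▸ hz2)
    -- split ℓ'
    have hℓne : ℓ' ≠ [] := by
      intro h
      rw [h] at hℓlen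
      simp at hℓlen
      omega
    obtain ⟨p₀, ℓ'', hℓsplit⟩ := List.exists_cons_of_ne_nil hℓne
    have hp₀ : 1 ≤ p₀ ∧ p₀ ≤ q := hparts p₀ (by rw [hℓsplit]; exact List.mem_cons_self)
    -- pick in C₂ with priority colour z
    obtain ⟨A₂, hA₂card, hzA₂, hA₂bound⟩ := spread_pick_pri hα hαβ ht ht1 hq'
      (Finset.mem_filter.1 hC₂).2 p₀ hp₀.1 hp₀.2 ∅ hz2 (Finset.notMem_empty z)
    -- assemble the rest
    have hC₂er : C₂ ∈ SS.erase C₁ := Finset.mem_erase.2 ⟨hne12.symm, hC₂⟩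
    have hT₂le : σ.card - 2 ≤ ((SS.erase C₁).erase C₂).card := by
      rw [Finset.card_erase_of_mem hC₂er, Finset.card_erase_of_mem hC₁]
      omega
    obtain ⟨T₂, hT₂sub, hT₂card⟩ := Finset.exists_subset_card_eq hT₂le
    have hT₂SS : T₂ ⊆ SS :=
      hT₂sub.trans ((Finset.erase_subset _ _).trans (Finset.erase_subset _ _))
    have hlen2 : T₂.toList.length = ℓ''.length := by
      rw [Finset.length_toList, hT₂card]
      have : ℓ'.length = ℓ''.length + 1 := by rw [hℓsplit]; simp
      omega
    have hspr2 : ∀ C ∈ T₂.toList, SpreadP c α Δ C := by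
      intro C hC
      have : C ∈ T₂ := by rwa [← Finset.mem_toList]
      exact (Finset.mem_filter.1 (hT₂SS this)).2
    have hparts2 : ∀ p ∈ ℓ'', 1 ≤ p ∧ p ≤ q := by
      intro p hp
      exact hparts p (by rw [hℓsplit]; exact List.mem_cons_of_mem _ hp)
    obtain ⟨lA'', hfst'', hcards'', hbound''⟩ := assemble hα hαβ ht ht1 hq'
      T₂.toList ℓ'' hlen2 hspr2 hparts2 (A₂.image fun j => c (C₂, j))
    set lB := (C₂, A₂) :: lA'' with hlBdef
    have hBcards : (lB.map fun pr => pr.2.card) = ℓ' := by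
      rw [hlBdef, hℓsplit]
      simp [hcards'', hA₂card]
    have hBfst : lB.map Prod.fst = C₂ :: T₂.toList := by
      rw [hlBdef]; simp [hfst'']
    have hC₂T₂ : C₂ ∉ T₂.toList := by
      intro h
      have : C₂ ∈ T₂ := by rwa [← Finset.mem_toList]
      exact (Finset.mem_erase.1 (hT₂sub this)).1 rfl
    have hBnodup : (lB.map Prod.fst).Nodup := by
      rw [hBfst]
      exact List.nodup_cons.2 ⟨hC₂T₂, Finset.nodup_toList T₂⟩
    have hC₁lB : C₁ ∉ lB.map Prod.fst := by
      rw [hBfst]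
      intro h
      rcases List.mem_cons.1 h with h | h
      · exact hne12 h
      · have : C₁ ∈ T₂ := by rwa [← Finset.mem_toList]
        exact (Finset.mem_erase.1 ((Finset.erase_subset _ _) (hT₂sub this))).1 rfl
    have hI₁eq : (build lB).image c
        = (A₂.image fun j => c (C₂, j)) ∪ (build lA'').image c := build_image c C₂ A₂ lA''
    have hβle : β ≤ ((build lB).image c).card := by
      rw [hI₁eq]
      have h5 : ((A₂.image fun j => c (C₂, j)) ∪ (build lA'').image c).card
          ≥ min ((A₂.image fun j => c (C₂, j)).card + ℓ''.sum) β := hbound''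
      have h6 : min ((∅ : Finset ℕ).card + p₀) β ≤ (A₂.image fun j => c (C₂, j)).card := by
        have := hA₂bound
        rwa [Finset.empty_union] at this
      have h7 : ℓ'.sum = p₀ + ℓ''.sum := by rw [hℓsplit]; simp
      have h8 : (∅ : Finset ℕ).card = 0 := rfl
      rw [h8] at h6
      have h9 : β ≤ r - δ := by omega
      rw [← hℓsum] at h9
      omega
    have hzI₁ : z ∈ (build lB).image c := by
      rw [hI₁eq]
      exact Finset.mem_union_left _ hzA₂
    apply high_edge_false hcol hδmem h0 hδq huse C₁ lB hBcards hBnodup hC₁lB hβle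
    intro x hxU hxI
    have hKC₁ : KCol c C₁ = U.erase z := by
      apply Finset.eq_of_subset_of_card_le
      · exact Finset.subset_erase.2 ⟨hKColU C₁, hz1⟩
      · rw [Finset.card_erase_of_mem hzU, hU, hKβ C₁ hC₁]
        omega
    rw [hKC₁, Finset.mem_erase]
    exact ⟨fun h => hxI (h ▸ hzI₁), hxU⟩
  · push_neg at hB3
    -- all spread classes miss the same colour z
    have hSSne : SS.Nonempty := Finset.card_pos.1 (by omega)
    obtain ⟨Cs, hCs⟩ := hSSne
    have hsd : (U \ KCol c Cs).Nonempty := by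
      apply Finset.card_pos.1
      rw [Finset.card_sdiff_of_subset (hKColU Cs), hU, hKβ Cs hCs]
      omega
    obtain ⟨z, hz⟩ := hsd
    obtain ⟨hzU, hzCs⟩ := Finset.mem_sdiff.1 hz
    have hzSS : ∀ C ∈ SS, z ∉ KCol c C := fun C hC => hB3 Cs hCs C hC z hzU hzCs
    obtain ⟨v, _, hv⟩ := Finset.mem_image.1 hzU
    set D := v.1 with hDdef
    have hzD : z ∈ KCol c D := by
      apply Finset.mem_image.2
      refine ⟨v.2, Finset.mem_univ _, ?_⟩
      show c (v.1, v.2) = z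
      rw [Prod.mk.eta]
      exact hv
    have hDSS : D ∉ SS := fun h => hzSS D h hzD
    obtain ⟨T₁, hT₁sub, hT₁card⟩ := Finset.exists_subset_card_eq (show σ.card - 1 ≤ SS.card by omega)
    obtain ⟨lB, hfst, hcards, hβle⟩ := hassembleβ T₁ hT₁sub hT₁card
    have hI₁sub : (build lB).image c ⊆ U.erase z := by
      intro y hy
      obtain ⟨pr, hpr, hyK⟩ := build_colours hy
      have hprT : pr.1 ∈ T₁ := by
        rw [← Finset.mem_toList, ← hfst]
        exact List.mem_map_of_mem hpr
      have hprSS : pr.1 ∈ SS := hT₁sub hprT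
      exact Finset.mem_erase.2 ⟨fun h => hzSS pr.1 hprSS (h ▸ hyK), hKColU pr.1 hyK⟩
    have hI₁eq : (build lB).image c = U.erase z := by
      apply Finset.eq_of_subset_of_card_le hI₁sub
      rw [Finset.card_erase_of_mem hzU, hU]
      omega
    apply high_edge_false hcol hδmem h0 hδq huse D lB hcards
    · rw [hfst]; exact Finset.nodup_toList T₁
    · rw [hfst]
      intro hmem
      have : D ∈ T₁ := by rwa [← Finset.mem_toList]
      exact hDSS (hT₁sub this)
    · exact hβle
    · intro x hxU hxI
      have hxz : x = z := by
        by_contra hne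
        apply hxI
        rw [hI₁eq]
        exact Finset.mem_erase.2 ⟨hne, hxU⟩
      rw [hxz]
      exact hzD

section analyzer
variable {n q : ℕ} {σ : Multiset ℕ} {K : Finset (Fin n × Fin q)}

lemma sigmaEdge_exists_class (h : sigmaEdge n q σ K) {x : ℕ} (hx : x ∈ σ) :
    ∃ i, (K.filter fun v => v.1 = i).card = x := by
  rw [sigmaEdge] at h
  rw [← h] at hx
  obtain ⟨i, _, hi⟩ := Multiset.mem_map.1 (Multiset.mem_of_mem_filter hx)
  exact ⟨i, hi⟩

lemma sigmaEdge_image_fst (h : sigmaEdge n q σ K) :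
    (K.image Prod.fst).card = σ.card := by
  have h2 : K.image Prod.fst
      = Finset.univ.filter (fun i => (K.filter fun v => v.1 = i).card ≠ 0) := by
    ext i
    simp only [Finset.mem_image, Finset.mem_filter, Finset.mem_univ, true_and, ne_eq,
      ← Nat.pos_iff_ne_zero, Finset.card_pos, Finset.filter_nonempty_iff]
  rw [← h, Multiset.filter_map]
  rw [Multiset.card_map, h2]
  rfl

end analyzer

section part1
variable {n q α β Δ : ℕ} {σ : Multiset ℕ}

lemma part1 (hΔmem : Δ ∈ σ) (hα : 2 ≤ α) (hΔα : α ≤ Δ) (hαβ : α ≤ β) (hn1 : 1 ≤ n)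
    (hq : q = (β - α + 1) * ((Δ - 1) / (α - 1)) + Δ - 1) :
    ∃ c : Fin n × Fin q → ℕ, isABColouring n q σ α β c ∧ usesExactly n q β c := by
  set t := (Δ - 1) / (α - 1) with ht
  have hΔ2 : 2 ≤ Δ := le_trans hα hΔα
  have ht1 : 1 ≤ t := by
    rw [ht]; exact Nat.one_le_div_iff (by omega) |>.2 (by omega)
  have htΔ : (α - 1) * t ≤ Δ - 1 := by
    rw [ht, Nat.mul_comm]
    exact Nat.div_mul_le_self _ _
  have hq' : q = (β - α + 1) * t + (Δ - 1) := by omega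
  -- the pattern colouring
  set f : Fin q → ℕ := fun j => min (j.1 / t) (β - 1) with hf
  set c : Fin n × Fin q → ℕ := fun v => f v.2 with hc
  set m := Δ - 1 - (α - 2) * t with hm
  have hmt : t ≤ m := by
    have : (α - 1) * t = (α - 2) * t + t := by
      have : α - 1 = (α - 2) + 1 := by omega
      rw [this]; ring
    omega
  have hqm : q = (β - 1) * t + m := by
    have h1 : (β - 1) * t = (β - α + 1) * t + (α - 2) * t := by
      have : β - 1 = (β - α + 1) + (α - 2) := by omega
      rw [this, Nat.add_mul]
    omega
  -- fiber bounds
  have fdiv : ∀ (j : Fin q) (x : ℕ), x ≠ β - 1 → f j = x → j.1 / t = x := by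
    intro j x hx hj
    rcases Nat.lt_or_ge (j.1 / t) (β - 1) with h | h
    · rw [hf] at hj; simpa [Nat.min_eq_left h.le] using hj
    · exfalso; apply hx; rw [hf] at hj; simp only at hj; omega
  have fiber_t : ∀ x : ℕ, x ≠ β - 1 →
      (Finset.univ.filter fun j : Fin q => f j = x).card ≤ t := by
    intro x hx
    have key : (Finset.univ.filter fun j : Fin q => f j = x).card ≤ (Finset.range t).card := by
      apply Finset.card_le_card_of_injOn (fun j => j.1 - x * t)
      · intro j hj
        simp only [Finset.mem_coe, Finset.mem_filter, Finset.mem_univ, true_and] at hj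
        have hdiv := fdiv j x hx hj
        have h1 : x * t ≤ j.1 := by
          conv_lhs => rw [← hdiv]
          exact Nat.div_mul_le_self _ _
        have h2 : j.1 < (x + 1) * t := by
          have hlt : j.1 / t < x + 1 := by omega
          exact (Nat.div_lt_iff_lt_mul (by omega : 0 < t)).1 hlt
        rw [Nat.succ_mul] at h2
        simp only [Finset.mem_coe, Finset.mem_range]
        omega
      · intro j1 hj1 j2 hj2 he
        simp only [Finset.mem_coe, Finset.mem_filter, Finset.mem_univ, true_and] at hj1 hj2
        have d1 := fdiv j1 x hx hj1
        have d2 := fdiv j2 x hx hj2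
        have g1 : x * t ≤ j1.1 := by rw [← d1]; exact Nat.div_mul_le_self _ _
        have g2 : x * t ≤ j2.1 := by rw [← d2]; exact Nat.div_mul_le_self _ _
        have he' : j1.1 - x * t = j2.1 - x * t := he
        apply Fin.ext
        omega
    simpa using key
  have flow : ∀ j : Fin q, f j = β - 1 → (β - 1) * t ≤ j.1 := by
    intro j hj
    have h : (β-1) ≤ j.1 / t := by
      rw [hf] at hj; simp only at hj; omega
    calc (β-1)*t ≤ (j.1/t)*t := Nat.mul_le_mul_right _ h
      _ ≤ j.1 := Nat.div_mul_le_self _ _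
  have fiber_m : (Finset.univ.filter fun j : Fin q => f j = β - 1).card ≤ m := by
    have key : (Finset.univ.filter fun j : Fin q => f j = β - 1).card
        ≤ (Finset.range m).card := by
      apply Finset.card_le_card_of_injOn (fun j => j.1 - (β - 1) * t)
      · intro j hj
        have h1 : j.1 < q := j.2
        simp only [Finset.mem_coe, Finset.mem_range]
        omega
      · intro j1 hj1 j2 hj2 he
        simp only [Finset.mem_coe, Finset.mem_filter, Finset.mem_univ, true_and] at hj1 hj2
        have g1 := flow j1 hj1
        have g2 := flow j2 hj2
        have he' : j1.1 - (β - 1) * t = j2.1 - (β - 1) * t := he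
        apply Fin.ext
        omega
    simpa using key
  -- counting: few colours cover few vertices
  have count : ∀ S : Finset ℕ, S.card ≤ α - 1 →
      (Finset.univ.filter fun j : Fin q => f j ∈ S).card ≤ Δ - 1 := by
    intro S hS
    have h1 : (Finset.univ.filter fun j : Fin q => f j ∈ S).card
        = ∑ x ∈ S, ((Finset.univ.filter fun j : Fin q => f j ∈ S).filter
            fun j => f j = x).card := by
      apply Finset.card_eq_sum_card_fiberwise
      intro j hj; exact (Finset.mem_filter.1 hj).2
    have h2 : ∀ x ∈ S, ((Finset.univ.filter fun j : Fin q => f j ∈ S).filter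
        fun j => f j = x).card ≤ t + (if x = β - 1 then m - t else 0) := by
      intro x hx
      have hsub : ((Finset.univ.filter fun j : Fin q => f j ∈ S).filter fun j => f j = x)
          ⊆ Finset.univ.filter fun j : Fin q => f j = x := by
        intro j hj
        simp only [Finset.mem_filter] at hj ⊢
        exact ⟨Finset.mem_univ _, hj.2⟩
      by_cases hxb : x = β - 1
      · rw [if_pos hxb, hxb]
        calc _ ≤ (Finset.univ.filter fun j : Fin q => f j = β - 1).card :=
              Finset.card_le_card (hxb ▸ hsub)
          _ ≤ m := fiber_m
          _ ≤ t + (m - t) := by omega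
      · rw [if_neg hxb]
        simpa using (Finset.card_le_card hsub).trans (fiber_t x hxb)
    calc (Finset.univ.filter fun j : Fin q => f j ∈ S).card
        ≤ ∑ x ∈ S, (t + (if x = β - 1 then m - t else 0)) := h1 ▸ Finset.sum_le_sum h2
      _ = S.card * t + ∑ x ∈ S, (if x = β - 1 then m - t else 0) := by
          rw [Finset.sum_add_distrib, Finset.sum_const, smul_eq_mul]
      _ ≤ (α - 1) * t + (m - t) := by
          have : ∑ x ∈ S, (if x = β - 1 then m - t else 0) ≤ m - t := by
            rw [Finset.sum_ite_eq' S (β - 1) (fun _ => m - t)]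
            split <;> omega
          have h3 : S.card * t ≤ (α - 1) * t := Nat.mul_le_mul_right _ hS
          omega
      _ ≤ Δ - 1 := by
          have : (α - 1) * t = (α - 2) * t + t := by
            have : α - 1 = (α - 2) + 1 := by omega
            rw [this]; ring
          omega
  -- any Δ-subset has at least α colours
  have minc : ∀ J : Finset (Fin q), J.card = Δ → α ≤ (J.image f).card := by
    intro J hJ
    by_contra hcon
    push_neg at hcon
    have hsub : J ⊆ Finset.univ.filter fun j : Fin q => f j ∈ J.image f := by
      intro j hj
      simp only [Finset.mem_filter, Finset.mem_univ, true_and]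
      exact Finset.mem_image_of_mem f hj
    have := (Finset.card_le_card hsub).trans (count _ (by omega))
    omega
  -- image over all of Fin q is range β
  have himg : Finset.univ.image f = Finset.range β := by
    apply Finset.Subset.antisymm
    · intro y hy
      simp only [Finset.mem_image] at hy
      obtain ⟨j, _, rfl⟩ := hy
      simp only [Finset.mem_range, hf]
      omega
    · intro x hx
      simp only [Finset.mem_range] at hx
      have hxt : x * t < q := by
        have h1 : x * t ≤ (β - 1) * t := Nat.mul_le_mul_right _ (by omega)
        omega
      simp only [Finset.mem_image]
      refine ⟨⟨x * t, hxt⟩, Finset.mem_univ _, ?_⟩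
      simp only [hf, Nat.mul_div_cancel _ (by omega : 0 < t)]
      omega
  refine ⟨c, ?_, ?_⟩
  · intro K hK
    constructor
    · obtain ⟨i, hi⟩ := sigmaEdge_exists_class hK hΔmem
      set P := K.filter fun v => v.1 = i with hP
      have hinj : Set.InjOn Prod.snd (P : Set (Fin n × Fin q)) := by
        intro v hv w hw he
        simp only [Finset.mem_coe, hP, Finset.mem_filter] at hv hw
        exact Prod.ext (hv.2.trans hw.2.symm) he
      have hJc : (P.image Prod.snd).card = Δ := by
        rw [Finset.card_image_of_injOn hinj, hi]
      have himgP : P.image c = (P.image Prod.snd).image f := by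
        rw [Finset.image_image]; rfl
      have h1 : α ≤ (P.image c).card := by
        rw [himgP]; exact minc _ hJc
      exact h1.trans (Finset.card_le_card (Finset.image_subset_image (Finset.filter_subset _ _)))
    · have hsub : K.image c ⊆ Finset.range β := by
        intro y hy
        simp only [Finset.mem_image] at hy
        obtain ⟨v, _, rfl⟩ := hy
        simp only [Finset.mem_range, hc, hf]
        omega
      simpa using Finset.card_le_card hsub
  · unfold usesExactly
    have h1 : (Finset.univ : Finset (Fin n × Fin q)).image c = Finset.univ.image f := by
      apply Finset.Subset.antisymm
      · intro y hy
        simp only [Finset.mem_image] at hy ⊢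
        obtain ⟨v, _, rfl⟩ := hy
        exact ⟨v.2, Finset.mem_univ _, rfl⟩
      · intro y hy
        simp only [Finset.mem_image] at hy ⊢
        obtain ⟨j, _, rfl⟩ := hy
        exact ⟨(⟨0, hn1⟩, j), Finset.mem_univ _, rfl⟩
    rw [h1, himg, Finset.card_range]

end part1

lemma sigmaEdge_image_fst' {n q : ℕ} {σ : Multiset ℕ} {K : Finset (Fin n × Fin q)}
    (h : sigmaEdge n q σ K) : (K.image Prod.fst).card = σ.card := by
  have h2 : K.image Prod.fst
      = Finset.univ.filter (fun i => (K.filter fun v => v.1 = i).card ≠ 0) := by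
    ext i
    simp only [Finset.mem_image, Finset.mem_filter, Finset.mem_univ, true_and, ne_eq,
      ← Nat.pos_iff_ne_zero, Finset.card_pos, Finset.filter_nonempty_iff]
  rw [← h, Multiset.filter_map, Multiset.card_map, h2]
  rfl

section parts34
variable {n α β s : ℕ}

lemma choose_ge (hα : 2 ≤ α) (hαβ : α ≤ β) : β + 1 ≤ (β + 1).choose (α - 1) := by
  have h2 : α - 2 + 1 = α - 1 := by omega
  have h1 : (β + 1) * β.choose (α - 2) = (β + 1).choose (α - 1) * (α - 1) := by
    have h0 := Nat.add_one_mul_choose_eq β (α - 2)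
    rw [h2] at h0
    exact h0
  have h3 : (α - 1).choose (α - 2) ≤ β.choose (α - 2) :=
    Nat.choose_le_choose _ (by omega)
  have h4 : (α - 1).choose (α - 2) = α - 1 := by
    have : α - 1 = (α - 2) + 1 := by omega
    rw [this, Nat.choose_succ_self_right]
  have h5 : (β + 1) * (α - 1) ≤ (β + 1).choose (α - 1) * (α - 1) := by
    calc (β + 1) * (α - 1) = (β + 1) * ((α - 1).choose (α - 2)) := by rw [h4]
      _ ≤ (β + 1) * (β.choose (α - 2)) := Nat.mul_le_mul_left _ h3
      _ = (β + 1).choose (α - 1) * (α - 1) := h1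
  exact Nat.le_of_mul_le_mul_right h5 (by omega)

lemma part4 (hα : 2 ≤ α) (hαs : α ≤ s) (hsβ : s ≤ β)
    (hn : (β + 1).choose (α - 1) * (s - 1) + s ≤ n) :
    β + 1 < (n - (s - 1 - (α - 1) * ((s - 1) / (α - 1)))
        + ((s - 1) / (α - 1)) - 1) / ((s - 1) / (α - 1)) := by
  set L := (s - 1) / (α - 1) with hLdef
  set ρ := s - 1 - (α - 1) * L with hρdef
  have hα1 : 1 ≤ α - 1 := by omega
  have hL1 : 1 ≤ L := Nat.one_le_div_iff (by omega) |>.2 (by omega)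
  have hLm : (α - 1) * L ≤ s - 1 := by
    rw [hLdef, Nat.mul_comm]; exact Nat.div_mul_le_self _ _
  have hmod : s - 1 < (α - 1) * L + (α - 1) := by
    have hdm := Nat.div_add_mod (s - 1) (α - 1)
    have hmlt : (s - 1) % (α - 1) < α - 1 := Nat.mod_lt _ (by omega)
    rw [hLdef]
    omega
  have hρ : ρ ≤ α - 2 := by omega
  have hch : β + 1 ≤ (β + 1).choose (α - 1) := choose_ge hα (le_trans hαs hsβ)
  have hn2 : (β + 1) * (s - 1) + s ≤ n := by
    have := Nat.mul_le_mul_right (s - 1) hch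
    omega
  have hLs : L ≤ s - 1 := Nat.div_le_self _ _
  have hmul : (β + 1) * L ≤ (β + 1) * (s - 1) := Nat.mul_le_mul_left _ hLs
  have hgoal : β + 2 ≤ (n - ρ + L - 1) / L := by
    rw [Nat.le_div_iff_mul_le (by omega : 0 < L)]
    have hexp : (β + 2) * L = (β + 1) * L + L := by ring
    omega
  omega

lemma part3 (hα : 2 ≤ α) (hαs : α ≤ s) (hsβ : s ≤ β)
    (hn : (β + 1).choose (α - 1) * (s - 1) + s ≤ n)
    {q : ℕ} (hq1 : 1 ≤ q) (σ : Multiset ℕ) (hs : σ.card = s) :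
    ∀ k : ℕ,
      (n - (s - 1 - (α - 1) * ((s - 1) / (α - 1)))
          + ((s - 1) / (α - 1)) - 1) / ((s - 1) / (α - 1)) ≤ k → k ≤ n →
      ∃ c : Fin n × Fin q → ℕ, isABColouring n q σ α β c ∧ usesExactly n q k c := by
  intro k hk1 hk2
  set L := (s - 1) / (α - 1) with hLdef
  set ρ := s - 1 - (α - 1) * L with hρdef
  have hα1 : 1 ≤ α - 1 := by omega
  have hL1 : 1 ≤ L := Nat.one_le_div_iff (by omega) |>.2 (by omega)
  have hLm : (α - 1) * L ≤ s - 1 := by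
    rw [hLdef, Nat.mul_comm]; exact Nat.div_mul_le_self _ _
  have hmod : s - 1 < (α - 1) * L + (α - 1) := by
    have hdm := Nat.div_add_mod (s - 1) (α - 1)
    have hmlt : (s - 1) % (α - 1) < α - 1 := Nat.mod_lt _ (by omega)
    rw [hLdef]
    omega
  have hρ : ρ ≤ α - 2 := by omega
  have hkβ : β + 2 ≤ k := by
    have h := part4 (s := s) (n := n) hα hαs hsβ hn
    rw [← hLdef, ← hρdef] at h
    omega
  have hk1' : 1 ≤ k - 1 := by omega
  -- n - ρ ≤ k * L
  have hnkL : n - ρ ≤ k * L := by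
    have h1 : (n - ρ + L - 1) / L ≤ k := hk1
    have h2 : n - ρ + L - 1 < (k + 1) * L := by
      rcases Nat.lt_or_ge (n - ρ + L - 1) ((k + 1) * L) with h | h
      · exact h
      · exfalso
        have := (Nat.le_div_iff_mul_le (by omega : 0 < L)).2 h
        omega
    have hexp : (k + 1) * L = k * L + L := by ring
    omega
  set a := min (L + ρ) (n - (k - 1)) with hadef
  have ha1 : 1 ≤ a := by
    apply le_min (by omega)
    omega
  have han : a ≤ n - k + 1 := by omega
  -- key : n - a ≤ (k-1) * L
  have hkey : n - a ≤ (k - 1) * L := by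
    have hexp : k * L = (k - 1) * L + L := by
      rw [← Nat.succ_mul, Nat.succ_eq_add_one, Nat.sub_add_cancel (by omega : 1 ≤ k)]
    rcases le_or_gt (L + ρ) (n - (k - 1)) with h | h
    · have : a = L + ρ := by rw [hadef]; exact min_eq_left h
      omega
    · have : a = n - (k - 1) := by rw [hadef]; exact min_eq_right (by omega)
      have hL' : k - 1 ≤ (k - 1) * L := Nat.le_mul_of_pos_right _ (by omega)
      omega
  set g : Fin n → ℕ := fun i => if i.1 < a then 0 else 1 + (i.1 - a) % (k - 1) with hg
  set c : Fin n × Fin q → ℕ := fun v => g v.1 with hc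
  -- fiber bounds
  have fiber0 : (Finset.univ.filter fun i : Fin n => g i = 0).card ≤ L + ρ := by
    have key : (Finset.univ.filter fun i : Fin n => g i = 0).card
        ≤ (Finset.range (L + ρ)).card := by
      apply Finset.card_le_card_of_injOn (fun i => i.1)
      · intro i hi
        simp only [Finset.mem_coe, Finset.mem_filter, Finset.mem_univ, true_and, hg] at hi
        have : i.1 < a := by
          by_contra hcon
          rw [if_neg hcon] at hi
          omega
        simp only [Finset.mem_coe, Finset.mem_range]
        omega
      · intro i1 _ i2 _ he
        exact Fin.ext he
    simpa using key
  have fiberx : ∀ x : ℕ, x ≠ 0 →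
      (Finset.univ.filter fun i : Fin n => g i = x).card ≤ L := by
    intro x hx
    have key : (Finset.univ.filter fun i : Fin n => g i = x).card
        ≤ (Finset.range L).card := by
      apply Finset.card_le_card_of_injOn (fun i => (i.1 - a) / (k - 1))
      · intro i hi
        have h1 : i.1 - a < (k - 1) * L := by
          have := i.2
          omega
        simp only [Finset.mem_coe, Finset.mem_range]
        rw [Nat.div_lt_iff_lt_mul (by omega : 0 < k - 1)]
        calc i.1 - a < (k - 1) * L := h1
          _ = L * (k - 1) := by ring
      · intro i1 hi1 i2 hi2 he
        simp only [Finset.mem_coe, Finset.mem_filter, Finset.mem_univ, true_and, hg] at hi1 hi2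
        have ha1' : ¬ i1.1 < a := by
          by_contra hcon; rw [if_pos hcon] at hi1; omega
        have ha2' : ¬ i2.1 < a := by
          by_contra hcon; rw [if_pos hcon] at hi2; omega
        rw [if_neg ha1'] at hi1
        rw [if_neg ha2'] at hi2
        have hm : (i1.1 - a) % (k - 1) = (i2.1 - a) % (k - 1) := by omega
        have he' : (i1.1 - a) / (k - 1) = (i2.1 - a) / (k - 1) := he
        have d1 := Nat.div_add_mod (i1.1 - a) (k - 1)
        have d2 := Nat.div_add_mod (i2.1 - a) (k - 1)
        apply Fin.ext
        have : (k-1) * ((i1.1-a)/(k-1)) = (k-1) * ((i2.1-a)/(k-1)) := by rw [he']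
        omega
    simpa using key
  -- min colours over any s classes
  have minc : ∀ T : Finset (Fin n), T.card = s → α ≤ (T.image g).card := by
    intro T hT
    by_contra hcon
    push_neg at hcon
    set S := T.image g with hS
    have hScard : S.card ≤ α - 1 := by omega
    have hsub : T ⊆ Finset.univ.filter fun i : Fin n => g i ∈ S := by
      intro i hi
      simp only [Finset.mem_filter, Finset.mem_univ, true_and]
      exact Finset.mem_image_of_mem g hi
    have h1 : (Finset.univ.filter fun i : Fin n => g i ∈ S).card
        = ∑ x ∈ S, ((Finset.univ.filter fun i : Fin n => g i ∈ S).filter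
            fun i => g i = x).card := by
      apply Finset.card_eq_sum_card_fiberwise
      intro i hi; exact (Finset.mem_filter.1 hi).2
    have h2 : ∀ x ∈ S, ((Finset.univ.filter fun i : Fin n => g i ∈ S).filter
        fun i => g i = x).card ≤ L + (if x = 0 then ρ else 0) := by
      intro x hx
      have hsub2 : ((Finset.univ.filter fun i : Fin n => g i ∈ S).filter fun i => g i = x)
          ⊆ Finset.univ.filter fun i : Fin n => g i = x := by
        intro i hi
        simp only [Finset.mem_filter] at hi ⊢
        exact ⟨Finset.mem_univ _, hi.2⟩
      by_cases hx0 : x = 0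
      · rw [if_pos hx0, hx0]
        calc _ ≤ (Finset.univ.filter fun i : Fin n => g i = 0).card :=
              Finset.card_le_card (hx0 ▸ hsub2)
          _ ≤ L + ρ := fiber0
      · rw [if_neg hx0]
        simpa using (Finset.card_le_card hsub2).trans (fiberx x hx0)
    have h3 : (Finset.univ.filter fun i : Fin n => g i ∈ S).card ≤ (α - 1) * L + ρ := by
      calc (Finset.univ.filter fun i : Fin n => g i ∈ S).card
          ≤ ∑ x ∈ S, (L + (if x = 0 then ρ else 0)) := h1 ▸ Finset.sum_le_sum h2
        _ = S.card * L + ∑ x ∈ S, (if x = 0 then ρ else 0) := by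
            rw [Finset.sum_add_distrib, Finset.sum_const, smul_eq_mul]
        _ ≤ (α - 1) * L + ρ := by
            have hite : ∑ x ∈ S, (if x = 0 then ρ else 0) ≤ ρ := by
              rw [Finset.sum_ite_eq' S 0 (fun _ => ρ)]
              split <;> omega
            have := Nat.mul_le_mul_right L hScard
            omega
    have := (Finset.card_le_card hsub).trans h3
    omega
  refine ⟨c, ?_, ?_⟩
  · intro K hK
    have hTcard : (K.image Prod.fst).card = s := by rw [sigmaEdge_image_fst' hK, hs]
    have himg : K.image c = (K.image Prod.fst).image g := by
      rw [Finset.image_image]; rfl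
    constructor
    · rw [himg]; exact minc _ hTcard
    · rw [himg]
      calc ((K.image Prod.fst).image g).card ≤ (K.image Prod.fst).card :=
            Finset.card_image_le
        _ ≤ β := by omega
  · unfold usesExactly
    have h1 : (Finset.univ : Finset (Fin n × Fin q)).image c = Finset.univ.image g := by
      apply Finset.Subset.antisymm
      · intro y hy
        simp only [Finset.mem_image] at hy ⊢
        obtain ⟨v, _, rfl⟩ := hy
        exact ⟨v.1, Finset.mem_univ _, rfl⟩
      · intro y hy
        simp only [Finset.mem_image] at hy ⊢
        obtain ⟨i, _, rfl⟩ := hy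
        exact ⟨(i, ⟨0, hq1⟩), Finset.mem_univ _, rfl⟩
    have h2 : Finset.univ.image g = Finset.range k := by
      apply Finset.Subset.antisymm
      · intro y hy
        simp only [Finset.mem_image] at hy
        obtain ⟨i, _, rfl⟩ := hy
        simp only [Finset.mem_range, hg]
        split
        · omega
        · have := Nat.mod_lt (i.1 - a) (show 0 < k - 1 by omega)
          omega
      · intro x hx
        simp only [Finset.mem_range] at hx
        simp only [Finset.mem_image]
        by_cases hx0 : x = 0
        · refine ⟨⟨0, by omega⟩, Finset.mem_univ _, ?_⟩
          simp only [hg]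
          rw [if_pos (by omega : (0:ℕ) < a)]
          omega
        · refine ⟨⟨a + (x - 1), by omega⟩, Finset.mem_univ _, ?_⟩
          simp only [hg]
          rw [if_neg (by omega)]
          have : a + (x - 1) - a = x - 1 := by omega
          rw [this, Nat.mod_eq_of_lt (by omega)]
          omega
    rw [h1, h2, Finset.card_range]

end parts34

theorem stmt17 (n r q α β Δ δ : ℕ) (σ : Multiset ℕ)
    (hpart : IsPartitionOf σ r)
    (hΔmem : Δ ∈ σ) (hΔmax : ∀ x ∈ σ, x ≤ Δ)
    (hδmem : δ ∈ σ) (hδmin : ∀ x ∈ σ, δ ≤ x)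
    (hα : 2 ≤ α) (hΔα : α ≤ Δ) (hδβ : δ ≤ r - β)
    (hαs : α ≤ σ.card) (hsβ : σ.card ≤ β)
    (hq : q = (β - α + 1) * ((Δ - 1) / (α - 1)) + Δ - 1)
    (hn : (β + 1).choose (α - 1) * (σ.card - 1) + σ.card ≤ n) :
    (∃ c : Fin n × Fin q → ℕ, isABColouring n q σ α β c ∧ usesExactly n q β c) ∧
    (¬ ∃ c : Fin n × Fin q → ℕ, isABColouring n q σ α β c ∧ usesExactly n q (β + 1) c) ∧
    (∀ k : ℕ,
        (n - (σ.card - 1 - (α - 1) * ((σ.card - 1) / (α - 1)))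
            + ((σ.card - 1) / (α - 1)) - 1) / ((σ.card - 1) / (α - 1)) ≤ k → k ≤ n →
        ∃ c : Fin n × Fin q → ℕ, isABColouring n q σ α β c ∧ usesExactly n q k c) ∧
    β + 1 < (n - (σ.card - 1 - (α - 1) * ((σ.card - 1) / (α - 1)))
        + ((σ.card - 1) / (α - 1)) - 1) / ((σ.card - 1) / (α - 1)) := by
  have hαβ : α ≤ β := le_trans hαs hsβ
  have hn1 : 1 ≤ n := by
    have h2 : 2 ≤ σ.card := le_trans hα hαs
    omega
  have hq1 : 1 ≤ q := by
    have hΔ2 : 2 ≤ Δ := le_trans hα hΔα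
    omega
  refine ⟨?_, ?_, ?_, ?_⟩
  · exact part1 hΔmem hα hΔα hαβ hn1 hq
  · exact part2 hpart.1 hpart.2 hΔmem hΔmax hδmem hα hΔα hδβ hαs hsβ hq hn
  · exact part3 hα hαs hsβ hn hq1 σ rfl
  · exact part4 hα hαs hsβ hn
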